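/- Let $f : \mathbb{R} \to (0,\infty)$ be a continuous, log-concave probability density with cumulative distribution function $F(t) = \int_{-\infty}^t f$, which is strictly increasing with inverse $F^{-1} : (0,1) \to \mathbb{R}$. Then the function $\psi = f \circ F^{-1} : (0,1) \to (0,\infty)$ is concave. -/

import Mathlib

open Real MeasureTheory

private lemma twopoint (f : ℝ → ℝ) (hf_pos : ∀ x, 0 < f x)
    (h : ConcaveOn ℝ Set.univ fun x => Real.log (f x))
    (x y a b : ℝ) (ha : 0 ≤ a) (hb : 0 ≤ b) (hab : a + b = 1) :
    f x * f y ≤ f (a * x + b * y) * f (b * x + a * y) := by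
  have h1 := h.2 (Set.mem_univ x) (Set.mem_univ y) ha hb hab
  have h2 := h.2 (Set.mem_univ x) (Set.mem_univ y) hb ha (by linarith)
  simp only [smul_eq_mul] at h1 h2
  have e : a * Real.log (f x) + b * Real.log (f y) +
      (b * Real.log (f x) + a * Real.log (f y)) = Real.log (f x) + Real.log (f y) := by
    linear_combination (Real.log (f x) + Real.log (f y)) * hab
  have key : Real.log (f x) + Real.log (f y) ≤
      Real.log (f (a * x + b * y)) + Real.log (f (b * x + a * y)) := by linarith
  calc f x * f y = Real.exp (Real.log (f x) + Real.log (f y)) := by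
        rw [Real.exp_add, Real.exp_log (hf_pos x), Real.exp_log (hf_pos y)]
    _ ≤ Real.exp (Real.log (f (a * x + b * y)) + Real.log (f (b * x + a * y))) :=
        Real.exp_le_exp.2 key
    _ = _ := by
        rw [Real.exp_add, Real.exp_log (hf_pos _), Real.exp_log (hf_pos _)]

/-- for `x ≤ p`, `x ≤ q`: `f x * f (p + q - x) ≤ f p * f q`. -/
private lemma twopoint' (f : ℝ → ℝ) (hf_pos : ∀ x, 0 < f x)
    (h : ConcaveOn ℝ Set.univ fun x => Real.log (f x))
    (x p q : ℝ) (hp : x ≤ p) (hq : x ≤ q) :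
    f x * f (p + q - x) ≤ f p * f q := by
  rcases eq_or_lt_of_le (le_trans hp (by linarith : p ≤ p + q - x)) with hxy | hxy
  · have hpx : p = x := le_antisymm (by linarith) hp
    have hqx : q = x := by linarith
    have hxx : p + q - x = x := by rw [hpx, hqx]; ring
    rw [hxx, hpx, hqx]
  · set y := p + q - x with hy
    have hyx : 0 < y - x := by linarith
    have hne : y - x ≠ 0 := ne_of_gt hyx
    have key := twopoint f hf_pos h x y ((y - p)/(y-x)) ((p - x)/(y-x))
      (div_nonneg (by rw [hy]; linarith) hyx.le)
      (div_nonneg (by linarith) hyx.le)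
      (by rw [← add_div, div_eq_one_iff_eq hne]; ring)
    have e1 : (y - p)/(y-x) * x + (p - x)/(y-x) * y = p := by field_simp; ring
    have e2 : (p - x)/(y-x) * x + (y - p)/(y-x) * y = q := by field_simp; ring
    rw [e1, e2] at key
    exact key

theorem stmt7 (f : ℝ → ℝ) (hf_cont : Continuous f) (hf_pos : ∀ x, 0 < f x)
    (hf_int : Integrable f) (hf_prob : ∫ x, f x = 1)
    (hf_logconcave : ConcaveOn ℝ Set.univ fun x => Real.log (f x))
    (F : ℝ → ℝ) (hF : ∀ t, F t = ∫ x in Set.Iic t, f x)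
    (hF_mono : StrictMono F)
    (Finv : ℝ → ℝ) (hFinv : ∀ s ∈ Set.Ioo (0 : ℝ) 1, F (Finv s) = s) :
    ConcaveOn ℝ (Set.Ioo (0 : ℝ) 1) fun s => f (Finv s) := by
  -- relation between F and interval integrals
  have hFint : ∀ P Q : ℝ, (∫ t in P..Q, f t) = F Q - F P := by
    intro P Q
    rw [hF, hF]
    exact (intervalIntegral.integral_Iic_sub_Iic hf_int.integrableOn hf_int.integrableOn).symm
  -- core inequality
  have core : ∀ A B C : ℝ, A ≤ B → B ≤ C →
      f A * (F C - F B) + f C * (F B - F A) ≤ f B * (F C - F A) := by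
    intro A B C hAB hBC
    rw [← hFint A B, ← hFint B C, ← hFint A C]
    have hint : ∀ P Q : ℝ, IntervalIntegrable f volume P Q :=
      fun P Q => hf_cont.intervalIntegrable P Q
    have hD : A ≤ A + C - B := by linarith
    have hD' : A + C - B ≤ C := by linarith
    have split : (∫ t in A..C, f t) =
        (∫ t in A..(A + C - B), f t) + ∫ t in (A + C - B)..C, f t :=
      (intervalIntegral.integral_add_adjacent_intervals (hint _ _) (hint _ _)).symm
    -- claim 1 : f A * ∫_B^C f ≤ f B * ∫_A^{A+C-B} f
    have claim1 : f A * (∫ t in B..C, f t) ≤ f B * ∫ t in A..(A + C - B), f t := by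
      have sub1 : (∫ t in B..C, f t) = ∫ t in A..(A + C - B), f (t + (B - A)) := by
        rw [intervalIntegral.integral_comp_add_right]
        congr 1 <;> ring
      rw [sub1, ← intervalIntegral.integral_const_mul, ← intervalIntegral.integral_const_mul]
      apply intervalIntegral.integral_mono_on hD
      · exact (continuous_const.mul (hf_cont.comp (continuous_id.add continuous_const))).intervalIntegrable _ _
      · exact (continuous_const.mul hf_cont).intervalIntegrable _ _
      · intro t ht
        have h1 : A ≤ t := ht.1
        have := twopoint' f hf_pos hf_logconcave A B t hAB h1
        calc f A * f (t + (B - A)) = f A * f (B + t - A) := by ring_nf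
          _ ≤ f B * f t := this
    -- claim 2 : f C * ∫_A^B f ≤ f B * ∫_{A+C-B}^C f
    have claim2 : f C * (∫ t in A..B, f t) ≤ f B * ∫ t in (A + C - B)..C, f t := by
      have sub2 : (∫ t in (A + C - B)..C, f t) = ∫ t in A..B, f (t + (C - B)) := by
        rw [intervalIntegral.integral_comp_add_right]
        congr 1 <;> ring
      rw [sub2, ← intervalIntegral.integral_const_mul, ← intervalIntegral.integral_const_mul]
      apply intervalIntegral.integral_mono_on hAB
      · exact (continuous_const.mul hf_cont).intervalIntegrable _ _
      · exact (continuous_const.mul (hf_cont.comp (continuous_id.add continuous_const))).intervalIntegrable _ _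
      · intro t ht
        have h2 : t ≤ B := ht.2
        have := twopoint' f hf_pos hf_logconcave t (t + C - B) B (by linarith) h2
        calc f C * f t = f t * f ((t + C - B) + B - t) := by ring_nf
          _ ≤ f (t + C - B) * f B := this
          _ = f B * f (t + (C - B)) := by ring_nf
    rw [split]
    nlinarith [claim1, claim2]
  -- main concavity argument, assuming x ≤ y
  have main : ∀ x ∈ Set.Ioo (0:ℝ) 1, ∀ y ∈ Set.Ioo (0:ℝ) 1, ∀ a b : ℝ,
      0 ≤ a → 0 ≤ b → a + b = 1 → x ≤ y →
      a * f (Finv x) + b * f (Finv y) ≤ f (Finv (a * x + b * y)) := by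
    intro x hx y hy a b ha hb hab hxy
    have hu : a * x + b * y ∈ Set.Ioo (0:ℝ) 1 := by
      constructor
      · nlinarith [hx.1, hy.1]
      · nlinarith [hx.2, hy.2]
    rcases eq_or_lt_of_le hxy with h | h
    · subst h
      have : a * x + b * x = x := by linear_combination x * hab
      rw [this]; nlinarith [hf_pos (Finv x)]
    · set X := Finv x; set Y := Finv y; set U := Finv (a * x + b * y)
      have hFX : F X = x := hFinv x hx
      have hFY : F Y = y := hFinv y hy
      have hFU : F U = a * x + b * y := hFinv _ hu
      have hax : b * x ≤ b * y := mul_le_mul_of_nonneg_left h.le hb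
      have hay : a * x ≤ a * y := mul_le_mul_of_nonneg_left h.le ha
      have ex : a * x + b * x = x := by linear_combination x * hab
      have ey : a * y + b * y = y := by linear_combination y * hab
      have hXU : X ≤ U := by
        rw [← hF_mono.le_iff_le, hFX, hFU]; linarith
      have hUY : U ≤ Y := by
        rw [← hF_mono.le_iff_le, hFU, hFY]; linarith
      have hc := core X U Y hXU hUY
      rw [hFX, hFY, hFU] at hc
      have e1 : y - (a * x + b * y) = a * (y - x) := by linear_combination (-y) * hab
      have e2 : (a * x + b * y) - x = b * (y - x) := by linear_combination x * hab
      rw [e1, e2] at hc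
      have hyx : 0 < y - x := by linarith
      nlinarith [hc, hyx]
  constructor
  · exact convex_Ioo 0 1
  · intro x hx y hy a b ha hb hab
    simp only [smul_eq_mul]
    rcases le_total x y with h | h
    · exact main x hx y hy a b ha hb hab h
    · have h1 := main y hy x hx b a hb ha (by linarith) h
      have : b * y + a * x = a * x + b * y := by ring
      rw [this] at h1
      linarith
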